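/- arXiv:2212.12989 — 2 statements merged into one kernel-verified Lean document; each statement's English description precedes it below -/
import Mathlib

section
/- Let K be a T×T positive semidefinite real symmetric matrix with eigenvalues λ_1 ≥ … ≥ λ_T satisfying λ_j ≤ R₀ r^j for all j, for constants R₀ > 0 and 0 < r < 1. Let M be a k×k principal submatrix of K with eigenvalues μ_1 ≥ … ≥ μ_k, and suppose α^{k−1} < ∏_{j=1}^{k−1} μ_j for some α > 0 with α < R₀. Then k < 2 ln(R₀/α) / ln(1/r). -/
open Matrix Finset

section
variable {k T : ℕ}

noncomputable def emb (f : Fin k → Fin T) :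
    EuclideanSpace ℝ (Fin k) →ₗ[ℝ] EuclideanSpace ℝ (Fin T) where
  toFun v := ∑ i, v i • EuclideanSpace.single (f i) (1 : ℝ)
  map_add' v w := by
    simp only [PiLp.add_apply, add_smul, Finset.sum_add_distrib]
  map_smul' c v := by
    simp only [PiLp.smul_apply, smul_eq_mul, RingHom.id_apply, Finset.smul_sum, smul_smul]

lemma emb_apply (f : Fin k → Fin T) (v : EuclideanSpace ℝ (Fin k)) (t : Fin T) :
    emb f v t = ∑ i, if t = f i then v i else 0 := by
  simp only [emb, LinearMap.coe_mk, AddHom.coe_mk]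
  rw [WithLp.ofLp_sum, Finset.sum_apply]
  refine Finset.sum_congr rfl fun i _ => ?_
  simp [PiLp.smul_apply, EuclideanSpace.single_apply, mul_ite]

lemma emb_at {f : Fin k → Fin T} (hf : Function.Injective f)
    (v : EuclideanSpace ℝ (Fin k)) (i : Fin k) : emb f v (f i) = v i := by
  rw [emb_apply]
  rw [Finset.sum_congr rfl (g := fun i' => if i = i' then v i' else 0)
    (fun i' _ => by simp [hf.eq_iff, eq_comm])]
  simp

lemma emb_sum {f : Fin k → Fin T} (hf : Function.Injective f)
    (v : EuclideanSpace ℝ (Fin k)) (g : Fin T → ℝ) :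
    ∑ t, emb f v t * g t = ∑ i, v i * g (f i) := by
  simp_rw [emb_apply, Finset.sum_mul, ite_mul, zero_mul]
  rw [Finset.sum_comm]
  refine Finset.sum_congr rfl fun i _ => ?_
  rw [Finset.sum_ite_eq' Finset.univ (f i) (fun t => v i * g t)]
  simp

lemma emb_inner {f : Fin k → Fin T} (hf : Function.Injective f)
    (v : EuclideanSpace ℝ (Fin k)) :
    (inner ℝ (emb f v) (emb f v) : ℝ) = inner ℝ v v := by
  simp only [PiLp.inner_apply, RCLike.inner_apply, conj_trivial]
  rw [emb_sum hf]
  refine Finset.sum_congr rfl fun i _ => ?_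
  rw [emb_at hf]

lemma emb_quad {f : Fin k → Fin T} (hf : Function.Injective f)
    (K : Matrix (Fin T) (Fin T) ℝ) (v : EuclideanSpace ℝ (Fin k)) :
    (inner ℝ (emb f v) (Matrix.toEuclideanLin K (emb f v)) : ℝ)
      = inner ℝ v (Matrix.toEuclideanLin (K.submatrix f f) v) := by
  simp only [PiLp.inner_apply, RCLike.inner_apply, conj_trivial]
  have hL : ∀ (n : ℕ) (A : Matrix (Fin n) (Fin n) ℝ) (x : EuclideanSpace ℝ (Fin n)) (t : Fin n),
      (Matrix.toEuclideanLin A x) t = ∑ s, A t s * x s := by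
    intro n A x t
    simp [Matrix.toEuclideanLin, Matrix.mulVec, dotProduct]
  rw [Finset.sum_congr rfl fun t _ => mul_comm (Matrix.toEuclideanLin K (emb f v) t) (emb f v t),
    Finset.sum_congr rfl fun t _ => mul_comm (Matrix.toEuclideanLin (K.submatrix f f) v t) (v t)]
  rw [emb_sum hf]
  refine Finset.sum_congr rfl fun i _ => ?_
  rw [hL, hL]
  congr 1
  have h2 : ∀ s, K (f i) s * emb f v s = emb f v s * K (f i) s := fun s => mul_comm _ _
  rw [Finset.sum_congr rfl fun s _ => h2 s, emb_sum hf]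
  refine Finset.sum_congr rfl fun i' _ => ?_
  rw [Matrix.submatrix_apply, mul_comm]

lemma emb_injective {f : Fin k → Fin T} (hf : Function.Injective f) :
    Function.Injective (emb f) := by
  intro v w h
  ext i
  have h2 : emb f v (f i) = emb f w (f i) := by rw [h]
  rwa [emb_at hf, emb_at hf] at h2

lemma inner_self_expand {n : ℕ} (b : OrthonormalBasis (Fin n) ℝ (EuclideanSpace ℝ (Fin n)))
    (x : EuclideanSpace ℝ (Fin n)) :
    (inner ℝ x x : ℝ) = ∑ i, (inner ℝ (b i) x : ℝ) ^ 2 := by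
  rw [← b.sum_inner_mul_inner x x]
  refine Finset.sum_congr rfl fun i _ => ?_
  rw [real_inner_comm x (b i)]; ring

lemma toEL_eigen {n : ℕ} {A : Matrix (Fin n) (Fin n) ℝ} (hA : A.IsHermitian) (i : Fin n) :
    Matrix.toEuclideanLin A (hA.eigenvectorBasis i) = hA.eigenvalues i • hA.eigenvectorBasis i := by
  have h := hA.mulVec_eigenvectorBasis i
  apply (WithLp.equiv 2 (Fin n → ℝ)).injective
  ext t
  simp [Matrix.toEuclideanLin_apply, h]

lemma quad_expand {n : ℕ} {A : Matrix (Fin n) (Fin n) ℝ} (hA : A.IsHermitian)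
    (x : EuclideanSpace ℝ (Fin n)) :
    (inner ℝ x (Matrix.toEuclideanLin A x) : ℝ)
      = ∑ i, hA.eigenvalues i * (inner ℝ (hA.eigenvectorBasis i) x : ℝ) ^ 2 := by
  have hsym := Matrix.isHermitian_iff_isSymmetric.mp hA
  rw [← (hA.eigenvectorBasis).sum_inner_mul_inner x (Matrix.toEuclideanLin A x)]
  refine Finset.sum_congr rfl fun i _ => ?_
  have h1 : (inner ℝ (hA.eigenvectorBasis i) (Matrix.toEuclideanLin A x) : ℝ)
      = inner ℝ (Matrix.toEuclideanLin A (hA.eigenvectorBasis i)) x := (hsym _ _).symm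
  rw [h1, toEL_eigen hA i, real_inner_smul_left, real_inner_comm x (hA.eigenvectorBasis i)]
  ring

lemma mu_le_lam (hkT : k ≤ T) {K : Matrix (Fin T) (Fin T) ℝ}
    (hK : K.IsHermitian) {f : Fin k → Fin T} (hf : Function.Injective f)
    (hM : (K.submatrix f f).IsHermitian)
    (σ : Equiv.Perm (Fin T)) (τ : Equiv.Perm (Fin k)) (lam mu : ℕ → ℝ)
    (hlam_dec : ∀ i j, 1 ≤ i → i ≤ j → j ≤ T → lam j ≤ lam i)
    (hmu_dec : ∀ i j, 1 ≤ i → i ≤ j → j ≤ k → mu j ≤ mu i)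
    (hσ : ∀ i : Fin T, lam ((i : ℕ) + 1) = hK.eigenvalues (σ i))
    (hτ : ∀ i : Fin k, mu ((i : ℕ) + 1) = hM.eigenvalues (τ i))
    (j : ℕ) (hj1 : 1 ≤ j) (hjk : j ≤ k) : mu j ≤ lam j := by
  classical
  have hjT : j ≤ T := le_trans hjk hkT
  have hj1T : j - 1 ≤ T := le_trans (Nat.sub_le _ _) hjT
  set BK := hK.eigenvectorBasis with hBK
  set BM := hM.eigenvectorBasis with hBM
  set g : Fin j → Fin k := fun p => τ (Fin.castLE hjk p) with hg
  have hginj : Function.Injective g := τ.injective.comp (Fin.castLE_injective hjk)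
  set g' : Fin (j - 1) → Fin T := fun q => σ (Fin.castLE hj1T q) with hg'
  have hg'inj : Function.Injective g' := σ.injective.comp (Fin.castLE_injective hj1T)
  set vV : Fin j → EuclideanSpace ℝ (Fin k) := fun p => BM (g p) with hvV
  have hvVon : Orthonormal ℝ vV := BM.orthonormal.comp g hginj
  set vU : Fin (j - 1) → EuclideanSpace ℝ (Fin T) := fun q => BK (g' q) with hvU
  have hvUon : Orthonormal ℝ vU := BK.orthonormal.comp g' hg'inj
  set V0 : Submodule ℝ (EuclideanSpace ℝ (Fin k)) := Submodule.span ℝ (Set.range vV) with hV0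
  set U : Submodule ℝ (EuclideanSpace ℝ (Fin T)) := Submodule.span ℝ (Set.range vU) with hU
  set V : Submodule ℝ (EuclideanSpace ℝ (Fin T)) := V0.map (emb f) with hV
  have hrV0 : Module.finrank ℝ V0 = j := by
    rw [hV0, finrank_span_eq_card hvVon.linearIndependent, Fintype.card_fin]
  have hrV : Module.finrank ℝ V = j := by
    rw [hV, ← hrV0]
    exact ((Submodule.equivMapOfInjective _ (emb_injective hf) V0).symm.finrank_eq)
  have hrU : Module.finrank ℝ U = j - 1 := by
    rw [hU, finrank_span_eq_card hvUon.linearIndependent, Fintype.card_fin]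
  have hrUperp : Module.finrank ℝ (Uᗮ) = T - (j - 1) := by
    have h := Submodule.finrank_add_finrank_orthogonal U
    rw [hrU, finrank_euclideanSpace_fin] at h
    omega
  have hpos : 0 < Module.finrank ℝ (V ⊓ Uᗮ : Submodule ℝ _) := by
    have h1 := Submodule.finrank_sup_add_finrank_inf_eq V Uᗮ
    have h2 : Module.finrank ℝ (V ⊔ Uᗮ : Submodule ℝ _) ≤ T := by
      have h3 := Submodule.finrank_le (V ⊔ Uᗮ : Submodule ℝ (EuclideanSpace ℝ (Fin T)))
      rwa [finrank_euclideanSpace_fin] at h3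
    rw [hrV, hrUperp] at h1
    omega
  obtain ⟨x, hx, hx0⟩ : ∃ x ∈ (V ⊓ Uᗮ : Submodule ℝ _), x ≠ 0 := by
    rw [← Submodule.ne_bot_iff]
    rintro hbot
    rw [hbot] at hpos
    simp [finrank_bot] at hpos
  rw [Submodule.mem_inf] at hx
  obtain ⟨hxV, hxU⟩ := hx
  rw [hV, Submodule.mem_map] at hxV
  obtain ⟨v, hvV0, hvx⟩ := hxV
  have hxx : (0 : ℝ) < inner ℝ x x := by
    rw [real_inner_self_eq_norm_mul_norm]
    have : 0 < ‖x‖ := norm_pos_iff.mpr hx0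
    positivity
  -- upper bound
  have hupper : (inner ℝ x (Matrix.toEuclideanLin K x) : ℝ) ≤ lam j * inner ℝ x x := by
    rw [quad_expand hK, inner_self_expand BK x, Finset.mul_sum]
    refine Finset.sum_le_sum fun i _ => ?_
    by_cases hcase : ((σ.symm i : ℕ) < j - 1)
    · have hzero : (inner ℝ (BK i) x : ℝ) = 0 := by
        have hmem : BK i ∈ U := by
          apply Submodule.subset_span
          refine ⟨⟨(σ.symm i : ℕ), hcase⟩, ?_⟩
          show BK (g' _) = BK i
          congr 1
          show σ (Fin.castLE hj1T ⟨(σ.symm i : ℕ), hcase⟩) = i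
          have he : (Fin.castLE hj1T ⟨(σ.symm i : ℕ), hcase⟩) = σ.symm i := by
            apply Fin.ext; rfl
          rw [he, Equiv.apply_symm_apply]
        exact Submodule.inner_right_of_mem_orthogonal hmem hxU
      rw [hzero]
      simp
    · have h1 : hK.eigenvalues i ≤ lam j := by
        have h2 : hK.eigenvalues i = lam ((σ.symm i : ℕ) + 1) := by
          rw [hσ (σ.symm i), Equiv.apply_symm_apply]
        rw [h2]
        exact hlam_dec j _ hj1 (by omega) (by have := (σ.symm i).isLt; omega)
      exact mul_le_mul_of_nonneg_right h1 (sq_nonneg _)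
  -- lower bound
  have hlower : mu j * (inner ℝ v v : ℝ)
      ≤ inner ℝ v (Matrix.toEuclideanLin (K.submatrix f f) v) := by
    rw [quad_expand hM, inner_self_expand BM v, Finset.mul_sum]
    have hczero : ∀ i : Fin k, i ∉ Finset.image g Finset.univ → (inner ℝ (BM i) v : ℝ) = 0 := by
      intro i hi
      rw [hV0] at hvV0
      refine Submodule.span_induction (p := fun w _ => (inner ℝ (BM i) w : ℝ) = 0) ?_ ?_ ?_ ?_ hvV0
      · rintro w ⟨p, rfl⟩
        refine BM.orthonormal.2 fun hco => hi ?_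
        exact Finset.mem_image.mpr ⟨p, Finset.mem_univ _, hco.symm⟩
      · exact inner_zero_right _
      · intro a b _ _ ha hb
        rw [inner_add_right, ha, hb, add_zero]
      · intro a w _ hw
        rw [real_inner_smul_right, hw, mul_zero]
    have hsum1 : ∀ F : Fin k → ℝ, (∀ i ∉ Finset.image g Finset.univ, F i = 0) →
        ∑ i, F i = ∑ p, F (g p) := by
      intro F hF
      rw [← Finset.sum_subset (Finset.subset_univ (Finset.image g Finset.univ))
        (fun i _ hi => hF i hi)]
      rw [Finset.sum_image (fun a _ b _ h => hginj h)]
    rw [hsum1 _ (fun i hi => by rw [hczero i hi]; ring),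
        hsum1 _ (fun i hi => by rw [hczero i hi]; ring)]
    refine Finset.sum_le_sum fun p _ => ?_
    have h1 : mu j ≤ hM.eigenvalues (g p) := by
      have h2 : hM.eigenvalues (g p) = mu ((Fin.castLE hjk p : ℕ) + 1) := (hτ _).symm
      rw [h2]
      refine hmu_dec _ j (by omega) ?_ hjk
      have := p.isLt
      simp only [Fin.coe_castLE]
      omega
    exact mul_le_mul_of_nonneg_right h1 (sq_nonneg _)
  have e1 : (inner ℝ x x : ℝ) = inner ℝ v v := by rw [← hvx, emb_inner hf]
  have e2 : (inner ℝ x (Matrix.toEuclideanLin K x) : ℝ)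
      = inner ℝ v (Matrix.toEuclideanLin (K.submatrix f f) v) := by rw [← hvx, emb_quad hf]
  have hchain : mu j * (inner ℝ x x : ℝ) ≤ lam j * inner ℝ x x := by
    rw [e1]
    exact le_trans hlower (by rw [← e2]; exact e1 ▸ hupper)
  have hchain' : (inner ℝ x x : ℝ) * mu j ≤ (inner ℝ x x : ℝ) * lam j := by
    rw [mul_comm ((inner ℝ x x : ℝ)) (mu j), mul_comm ((inner ℝ x x : ℝ)) (lam j)]
    exact hchain
  exact le_of_mul_le_mul_left hchain' hxx

end
theorem stmt4 (T k : ℕ) (hk : 0 < k) (hkT : k ≤ T)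
    (K : Matrix (Fin T) (Fin T) ℝ) (hsym : K.IsSymm) (hpsd : K.PosSemidef)
    (lam : ℕ → ℝ)
    (hlam_dec : ∀ i j, 1 ≤ i → i ≤ j → j ≤ T → lam j ≤ lam i)
    (hlam_spec : ∃ σ : Equiv.Perm (Fin T), ∀ i : Fin T,
      lam ((i : ℕ) + 1) = hpsd.1.eigenvalues (σ i))
    (R₀ r : ℝ) (hR : 0 < R₀) (hr0 : 0 < r) (hr1 : r < 1)
    (hdecay : ∀ j ∈ Finset.Icc 1 T, lam j ≤ R₀ * r ^ j)
    (f : Fin k → Fin T) (hf : StrictMono f)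
    (hBpsd : (K.submatrix f f).PosSemidef)
    (mu : ℕ → ℝ)
    (hmu_dec : ∀ i j, 1 ≤ i → i ≤ j → j ≤ k → mu j ≤ mu i)
    (hmu_spec : ∃ σ : Equiv.Perm (Fin k), ∀ i : Fin k,
      mu ((i : ℕ) + 1) = hBpsd.1.eigenvalues (σ i))
    (α : ℝ) (hα : 0 < α) (hαR : α < R₀)
    (hprod : α ^ (k - 1) < ∏ j ∈ Finset.Icc 1 (k - 1), mu j) :
    (k : ℝ) < 2 * Real.log (R₀ / α) / Real.log (1 / r) := by
  classical
  obtain ⟨σ, hσ⟩ := hlam_spec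
  obtain ⟨τ, hτ⟩ := hmu_spec
  -- rule out k = 1
  rcases Nat.lt_or_ge k 2 with hk2 | hk2
  · have hk1 : k = 1 := by omega
    subst hk1
    rw [show (1:ℕ) - 1 = 0 from rfl] at hprod
    rw [Finset.Icc_eq_empty (by omega), Finset.prod_empty, pow_zero] at hprod
    exact absurd hprod (lt_irrefl _)
  have hinter : ∀ j, 1 ≤ j → j ≤ k → mu j ≤ lam j := fun j h1 h2 =>
    mu_le_lam hkT hpsd.1 hf.injective hBpsd.1 σ τ lam mu hlam_dec hmu_dec hσ hτ j h1 h2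
  have hmu_nonneg : ∀ j, 1 ≤ j → j ≤ k → 0 ≤ mu j := by
    intro j h1 h2
    have he : j = ((⟨j - 1, by omega⟩ : Fin k) : ℕ) + 1 := by simp; omega
    rw [he, hτ]
    exact hBpsd.eigenvalues_nonneg _
  have hstep : ∀ j ∈ Finset.Icc 1 (k - 1), mu j ≤ R₀ * r ^ j := by
    intro j hj
    rw [Finset.mem_Icc] at hj
    exact le_trans (hinter j hj.1 (by omega))
      (hdecay j (Finset.mem_Icc.mpr ⟨hj.1, by omega⟩))
  have hprod2 : α ^ (k - 1) < ∏ j ∈ Finset.Icc 1 (k - 1), (R₀ * r ^ j) :=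
    lt_of_lt_of_le hprod (Finset.prod_le_prod
      (fun j hj => hmu_nonneg j (Finset.mem_Icc.mp hj).1 (by have := (Finset.mem_Icc.mp hj).2; omega))
      hstep)
  rw [Finset.prod_mul_distrib, Finset.prod_const, Finset.prod_pow_eq_pow_sum,
    Nat.card_Icc] at hprod2
  set m := k - 1 with hm
  have hmk : (m : ℕ) + 1 = k := by omega
  set S := ∑ j ∈ Finset.Icc 1 m, j with hSdef
  rw [Nat.add_sub_cancel] at hprod2
  have hS : 2 * S = k * m := by
    have h1 : Finset.Icc 1 m = Finset.Ico 1 k := by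
      rw [← Finset.Ico_add_one_right_eq_Icc]
      have : m.succ = k := by omega
      rw [hmk]
    have h2 : ∑ j ∈ Finset.range k, j = S := by
      rw [hSdef, h1, Finset.range_eq_Ico,
        Finset.sum_eq_sum_Ico_succ_bot (by omega : 0 < k)]
      simp
    have h3 := Finset.sum_range_id_mul_two k
    rw [show k - 1 = m from rfl] at h3
    omega
  -- logs
  have hαm : (0:ℝ) < α ^ m := pow_pos hα _
  have hlog := Real.log_lt_log hαm hprod2
  rw [Real.log_pow, Real.log_mul (ne_of_gt (pow_pos hR _)) (ne_of_gt (pow_pos hr0 _)),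
    Real.log_pow, Real.log_pow] at hlog
  set L := Real.log (R₀ / α) with hLdef
  set ℓ := Real.log (1 / r) with hldef
  have hLeq : L = Real.log R₀ - Real.log α := by
    rw [hLdef, Real.log_div (ne_of_gt hR) (ne_of_gt hα)]
  have hleq : ℓ = - Real.log r := by rw [hldef, one_div, Real.log_inv]
  have hℓpos : (0:ℝ) < ℓ := by
    rw [hleq]
    have := Real.log_neg hr0 hr1
    linarith
  have hLpos : (0:ℝ) < L := by
    rw [hLdef]
    exact Real.log_pos ((one_lt_div hα).mpr hαR)
  have hSl : (S : ℝ) * ℓ < (m : ℝ) * L := by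
    rw [hleq, hLeq]
    nlinarith [hlog]
  have hScast : 2 * (S : ℝ) = (k : ℝ) * (m : ℝ) := by
    exact_mod_cast congrArg (fun n : ℕ => (n : ℝ)) hS
  have hmpos : (0:ℝ) < (m : ℝ) := by
    have : 1 ≤ m := by omega
    exact_mod_cast Nat.lt_of_lt_of_le Nat.zero_lt_one this
  rw [lt_div_iff₀ hℓpos]
  have h5 : (m : ℝ) * ((k : ℝ) * ℓ) < (m : ℝ) * (2 * L) := by nlinarith [hSl, hScast, hℓpos]
  exact lt_of_mul_lt_mul_left h5 (le_of_lt hmpos)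
end

section
/- Let K be a T×T positive semidefinite real symmetric matrix with eigenvalues λ_1 ≥ … ≥ λ_T satisfying λ_j ≤ R₀ j^{−p} for all j, for constants R₀ > 0 and p ≥ 1. Let M be a k×k principal submatrix of K with eigenvalues μ_1 ≥ … ≥ μ_k, and suppose α^{k−1} < ∏_{j=1}^{k−1} μ_j for some 0 < α ≤ R₀. Then ((k−1)!)^p < (R₀/α)^{k−1}, and consequently k ≤ e·(R₀/α)^{1/p} + 1. -/
open Matrix Finset

private lemma dot_sum {ι n : Type*} [Fintype ι] [Fintype n] (g : n → ℝ) (a : ι → ℝ)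
    (w : ι → n → ℝ) : g ⬝ᵥ (∑ m, a m • w m) = ∑ m, a m * (g ⬝ᵥ w m) := by
  simp only [dotProduct, Finset.sum_apply, Pi.smul_apply, smul_eq_mul, Finset.mul_sum]
  rw [Finset.sum_comm]
  exact Finset.sum_congr rfl fun m _ => Finset.sum_congr rfl fun t _ => by ring

private lemma aux_interlace {T k : ℕ} (hkT : k ≤ T)
    (A : Matrix (Fin T) (Fin T) ℝ) (hA : A.IsHermitian)
    (f : Fin k → Fin T) (hf : Function.Injective f)
    (hB : (A.submatrix f f).IsHermitian)
    (lam mu : ℕ → ℝ)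
    (hlam_dec : ∀ i j, 1 ≤ i → i ≤ j → j ≤ T → lam j ≤ lam i)
    (σ : Equiv.Perm (Fin T)) (hσ : ∀ i : Fin T, lam ((i : ℕ) + 1) = hA.eigenvalues (σ i))
    (hmu_dec : ∀ i j, 1 ≤ i → i ≤ j → j ≤ k → mu j ≤ mu i)
    (τ : Equiv.Perm (Fin k)) (hτ : ∀ m : Fin k, mu ((m : ℕ) + 1) = hB.eigenvalues (τ m))
    (j : ℕ) (hj1 : 1 ≤ j) (hjk : j ≤ k) : mu j ≤ lam j := by
  classical
  set B := A.submatrix f f with hBdef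
  set u : Fin T → Fin T → ℝ := fun i => ⇑(hA.eigenvectorBasis i) with hu_def
  set v : Fin k → Fin k → ℝ := fun m => ⇑(hB.eigenvectorBasis m) with hv_def
  set E : Matrix (Fin T) (Fin k) ℝ := fun t s => if f s = t then 1 else 0 with hE_def
  -- basic embedding identities
  have hEdot : ∀ (w : Fin k → ℝ) (g : Fin T → ℝ), (E *ᵥ w) ⬝ᵥ g = ∑ s, w s * g (f s) := by
    intro w g
    simp only [dotProduct, Matrix.mulVec, hE_def, ite_mul, one_mul, zero_mul,
      Finset.sum_mul]
    rw [Finset.sum_comm]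
    simp
  have hEE : ∀ w w' : Fin k → ℝ, (E *ᵥ w) ⬝ᵥ (E *ᵥ w') = w ⬝ᵥ w' := by
    intro w w'
    rw [hEdot]
    simp [Matrix.mulVec, dotProduct, hE_def, hf.eq_iff]
  have hEAE : ∀ w w' : Fin k → ℝ, (E *ᵥ w) ⬝ᵥ (A *ᵥ (E *ᵥ w')) = w ⬝ᵥ (B *ᵥ w') := by
    intro w w'
    rw [hEdot]
    have hrow : ∀ s, (A *ᵥ (E *ᵥ w')) (f s) = (B *ᵥ w') s := by
      intro s
      simp only [Matrix.mulVec, dotProduct, hE_def, hBdef, Matrix.submatrix_apply,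
        mul_ite, mul_one, mul_zero, Finset.mul_sum]
      rw [Finset.sum_comm]
      simp
    simp only [hrow, dotProduct]
  -- orthonormality
  have hu_orth : ∀ a b : Fin T, u a ⬝ᵥ u b = if a = b then 1 else 0 := by
    intro a b
    have h := hA.eigenvectorBasis.orthonormal
    rw [orthonormal_iff_ite] at h
    simpa [PiLp.inner_apply, dotProduct, hu_def, mul_comm] using h a b
  have hv_orth : ∀ a b : Fin k, v a ⬝ᵥ v b = if a = b then 1 else 0 := by
    intro a b
    have h := hB.eigenvectorBasis.orthonormal
    rw [orthonormal_iff_ite] at h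
    simpa [PiLp.inner_apply, dotProduct, hv_def, mul_comm] using h a b
  have hAu : ∀ i, A *ᵥ u i = hA.eigenvalues i • u i := hA.mulVec_eigenvectorBasis
  have hBv : ∀ m, B *ᵥ v m = hB.eigenvalues m • v m := hB.mulVec_eigenvectorBasis
  -- index embeddings
  have hjT : j ≤ T := hjk.trans hkT
  set e1 : Fin j → Fin k := fun m => ⟨m.1, lt_of_lt_of_le m.2 hjk⟩ with he1
  set e2 : Fin (j - 1) → Fin T := fun r => ⟨r.1, by omega⟩ with he2
  -- the constraint matrix and a nonzero kernel element
  set M : Matrix (Fin (j - 1)) (Fin j) ℝ := fun r m => u (σ (e2 r)) ⬝ᵥ (E *ᵥ v (τ (e1 m)))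
    with hM
  have hker : LinearMap.ker M.mulVecLin ≠ ⊥ := by
    apply LinearMap.ker_ne_bot_of_finrank_lt
    simp only [Module.finrank_fin_fun]
    omega
  obtain ⟨c, hc_mem, hc0⟩ := (Submodule.ne_bot_iff _).mp hker
  have hMc : M *ᵥ c = 0 := by
    have := LinearMap.mem_ker.mp hc_mem
    rwa [Matrix.mulVecLin_apply] at this
  -- the test vectors
  set y : Fin k → ℝ := ∑ m, c m • v (τ (e1 m)) with hy
  set x : Fin T → ℝ := E *ᵥ y with hx
  have he1inj : Function.Injective e1 := fun a b hab => by
    simpa [he1, Fin.ext_iff] using hab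
  have hyv : ∀ m : Fin j, y ⬝ᵥ v (τ (e1 m)) = c m := by
    intro m
    have h := dot_sum (v (τ (e1 m))) c (fun m => v (τ (e1 m)))
    rw [← hy] at h
    rw [dotProduct_comm, h]
    simp [hv_orth, τ.injective.eq_iff, he1inj.eq_iff]
  have hyy : y ⬝ᵥ y = ∑ m, c m * c m := by
    have h := dot_sum y c (fun m => v (τ (e1 m)))
    rw [← hy] at h
    rw [h]
    exact Finset.sum_congr rfl fun m _ => by rw [hyv]
  have hyy_pos : 0 < y ⬝ᵥ y := by
    rw [hyy]
    obtain ⟨m0, hm0⟩ := Function.ne_iff.mp hc0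
    have hm0' : c m0 ≠ 0 := by simpa using hm0
    exact Finset.sum_pos' (fun m _ => mul_self_nonneg _)
      ⟨m0, Finset.mem_univ _, mul_self_pos.mpr hm0'⟩
  -- B-side: lower bound for the quadratic form
  have hBy : B *ᵥ y = ∑ m, (c m * hB.eigenvalues (τ (e1 m))) • v (τ (e1 m)) := by
    have h := map_sum B.mulVecLin (fun m => c m • v (τ (e1 m))) Finset.univ
    simp only [Matrix.mulVecLin_apply] at h
    rw [← hy] at h
    rw [h]
    refine Finset.sum_congr rfl fun m _ => ?_
    rw [Matrix.mulVec_smul, hBv, smul_smul]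
  have hmu_le : mu j * (y ⬝ᵥ y) ≤ y ⬝ᵥ (B *ᵥ y) := by
    rw [hBy, dot_sum, dot_sum]
    simp only [hyv]
    rw [Finset.mul_sum]
    refine Finset.sum_le_sum fun m _ => ?_
    have h1 : mu j ≤ hB.eigenvalues (τ (e1 m)) := by
      have h2 : mu ((m : ℕ) + 1) = hB.eigenvalues (τ (e1 m)) := hτ (e1 m)
      rw [← h2]
      exact hmu_dec ((m : ℕ) + 1) j (Nat.succ_le_succ (Nat.zero_le _)) m.2 hjk
    nlinarith [mul_self_nonneg (c m)]
  -- A-side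
  have hAT : Aᵀ = A := by
    rw [← Matrix.conjTranspose_eq_transpose_of_trivial]; exact hA
  set U : Matrix (Fin T) (Fin T) ℝ := fun i t => u i t with hU
  have hUUt : U * Uᵀ = 1 := by
    ext a b
    rw [Matrix.mul_apply]
    simp only [Matrix.transpose_apply]
    simpa [Matrix.mul_apply, Matrix.one_apply, hU, Matrix.transpose_apply,
      dotProduct] using hu_orth a b
  have hUtU : Uᵀ * U = 1 := mul_eq_one_comm.mp hUUt
  have hpres : ∀ a b : Fin T → ℝ, (U *ᵥ a) ⬝ᵥ (U *ᵥ b) = a ⬝ᵥ b := by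
    intro a b
    rw [Matrix.dotProduct_mulVec]
    have h1 : U *ᵥ a = a ᵥ* Uᵀ := by rw [Matrix.vecMul_transpose]
    rw [h1, Matrix.vecMul_vecMul, hUtU, Matrix.vecMul_one]
  have hrowA : ∀ i, u i ⬝ᵥ (A *ᵥ x) = hA.eigenvalues i * (u i ⬝ᵥ x) := by
    intro i
    rw [Matrix.dotProduct_mulVec]
    have h1 : u i ᵥ* A = hA.eigenvalues i • u i := by
      conv_lhs => rw [← hAT, Matrix.vecMul_transpose, hAu]
    rw [h1, smul_dotProduct, smul_eq_mul]
  have hxAx : x ⬝ᵥ (A *ᵥ x) = ∑ i, hA.eigenvalues i * ((U *ᵥ x) i * (U *ᵥ x) i) := by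
    rw [← hpres x (A *ᵥ x)]
    simp only [dotProduct]
    refine Finset.sum_congr rfl fun i _ => ?_
    have h2 : (U *ᵥ (A *ᵥ x)) i = hA.eigenvalues i * ((U *ᵥ x) i) := hrowA i
    rw [h2]; ring
  have hxx : x ⬝ᵥ x = ∑ i, (U *ᵥ x) i * (U *ᵥ x) i := by
    rw [← hpres x x]; rfl
  -- vanishing coefficients
  have hd0 : ∀ i : Fin T, ((σ.symm i : ℕ) + 1 < j) → (U *ᵥ x) i = 0 := by
    intro i hi
    have hr : ((σ.symm i : ℕ)) < j - 1 := by omega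
    set r : Fin (j - 1) := ⟨(σ.symm i : ℕ), hr⟩ with hrdef
    have he2r : σ (e2 r) = i := by
      have h3 : e2 r = σ.symm i := Fin.ext rfl
      rw [h3, Equiv.apply_symm_apply]
    have hMrow : ∑ m, M r m * c m = 0 := by
      have h4 : (M *ᵥ c) r = 0 := by rw [hMc]; rfl
      exact h4
    have hEy : E *ᵥ y = ∑ m, c m • (E *ᵥ v (τ (e1 m))) := by
      have h := map_sum E.mulVecLin (fun m => c m • v (τ (e1 m))) Finset.univ
      simp only [Matrix.mulVecLin_apply] at h
      rw [← hy] at h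
      rw [h]
      exact Finset.sum_congr rfl fun m _ => by rw [Matrix.mulVec_smul]
    have hux : u (σ (e2 r)) ⬝ᵥ x = 0 := by
      rw [hx, hEy, dot_sum, ← hMrow]
      exact Finset.sum_congr rfl fun m _ => by rw [hM]; ring
    have h5 : (U *ᵥ x) i = u i ⬝ᵥ x := rfl
    rw [h5, ← he2r]
    exact hux
  have hlam_le : x ⬝ᵥ (A *ᵥ x) ≤ lam j * (x ⬝ᵥ x) := by
    rw [hxAx, hxx, Finset.mul_sum]
    refine Finset.sum_le_sum fun i _ => ?_
    by_cases hcase : (σ.symm i : ℕ) + 1 < j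
    · rw [hd0 i hcase]; simp
    · have h1 : hA.eigenvalues i = lam ((σ.symm i : ℕ) + 1) := by
        have h6 := hσ (σ.symm i)
        rw [Equiv.apply_symm_apply] at h6
        exact h6.symm
      have h2 : lam ((σ.symm i : ℕ) + 1) ≤ lam j :=
        hlam_dec j _ hj1 (by omega) (by have := (σ.symm i).2; omega)
      rw [h1]
      nlinarith [mul_self_nonneg ((U *ᵥ x) i)]
  -- conclude
  have h7 : y ⬝ᵥ (B *ᵥ y) = x ⬝ᵥ (A *ᵥ x) := by rw [hx]; exact (hEAE y y).symm
  have h8 : x ⬝ᵥ x = y ⬝ᵥ y := by rw [hx]; exact hEE y y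
  have hkey : (y ⬝ᵥ y) * mu j ≤ (y ⬝ᵥ y) * lam j := by
    rw [mul_comm _ (mu j), mul_comm _ (lam j)]
    calc mu j * (y ⬝ᵥ y) ≤ y ⬝ᵥ (B *ᵥ y) := hmu_le
      _ = x ⬝ᵥ (A *ᵥ x) := h7
      _ ≤ lam j * (x ⬝ᵥ x) := hlam_le
      _ = lam j * (y ⬝ᵥ y) := by rw [h8]
  exact le_of_mul_le_mul_left hkey hyy_pos

theorem stmt5 (T k : ℕ) (hk : 0 < k) (hkT : k ≤ T)
    (K : Matrix (Fin T) (Fin T) ℝ) (hsym : K.IsSymm) (hpsd : K.PosSemidef)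
    (lam : ℕ → ℝ)
    (hlam_dec : ∀ i j, 1 ≤ i → i ≤ j → j ≤ T → lam j ≤ lam i)
    (hlam_spec : ∃ σ : Equiv.Perm (Fin T), ∀ i : Fin T,
      lam ((i : ℕ) + 1) = hpsd.1.eigenvalues (σ i))
    (R₀ p : ℝ) (hR : 0 < R₀) (hp : 1 ≤ p)
    (hdecay : ∀ j ∈ Finset.Icc 1 T, lam j ≤ R₀ * (j : ℝ) ^ (-p))
    (f : Fin k → Fin T) (hf : StrictMono f)
    (hBpsd : (K.submatrix f f).PosSemidef)
    (mu : ℕ → ℝ)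
    (hmu_dec : ∀ i j, 1 ≤ i → i ≤ j → j ≤ k → mu j ≤ mu i)
    (hmu_spec : ∃ σ : Equiv.Perm (Fin k), ∀ i : Fin k,
      mu ((i : ℕ) + 1) = hBpsd.1.eigenvalues (σ i))
    (α : ℝ) (hα0 : 0 < α) (hαR : α ≤ R₀)
    (hprod : α ^ (k - 1) < ∏ j ∈ Finset.Icc 1 (k - 1), mu j) :
    ((Nat.factorial (k - 1) : ℝ)) ^ p < (R₀ / α) ^ (k - 1) ∧
      (k : ℝ) ≤ Real.exp 1 * (R₀ / α) ^ (1 / p) + 1 := by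
  obtain ⟨σ, hσ⟩ := hlam_spec
  obtain ⟨τ, hτ⟩ := hmu_spec
  set N := k - 1 with hN
  have hp0 : 0 < p := lt_of_lt_of_le one_pos hp
  -- interlacing
  have hinter : ∀ j, 1 ≤ j → j ≤ k → mu j ≤ lam j := fun j hj1 hjk =>
    aux_interlace hkT K hpsd.1 f hf.injective hBpsd.1 lam mu hlam_dec σ hσ hmu_dec τ hτ j hj1 hjk
  -- nonnegativity of the mu's
  have hmu_nonneg : ∀ j, 1 ≤ j → j ≤ k → 0 ≤ mu j := by
    intro j hj1 hjk
    have hjm : j - 1 < k := by omega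
    have h1 : mu ((⟨j - 1, hjm⟩ : Fin k) : ℕ).succ = hBpsd.1.eigenvalues (τ ⟨j - 1, hjm⟩) :=
      hτ _
    have h2 : ((⟨j - 1, hjm⟩ : Fin k) : ℕ).succ = j := by simp; omega
    rw [h2] at h1
    rw [h1]
    exact hBpsd.eigenvalues_nonneg _
  -- product bound
  have hNT : N ≤ T := by omega
  have hNk : N ≤ k := by omega
  have hprod2 : ∏ j ∈ Finset.Icc 1 N, mu j ≤ ∏ j ∈ Finset.Icc 1 N, (R₀ * (j : ℝ) ^ (-p)) := by
    refine Finset.prod_le_prod (fun j hj => ?_) (fun j hj => ?_)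
    · rw [Finset.mem_Icc] at hj
      exact hmu_nonneg j hj.1 (hj.2.trans hNk)
    · rw [Finset.mem_Icc] at hj
      exact (hinter j hj.1 (hj.2.trans hNk)).trans
        (hdecay j (Finset.mem_Icc.mpr ⟨hj.1, hj.2.trans hNT⟩))
  set F : ℝ := (Nat.factorial N : ℝ) with hFdef
  have hF1 : (1 : ℝ) ≤ F := by
    rw [hFdef]
    exact_mod_cast Nat.one_le_iff_ne_zero.mpr (Nat.factorial_ne_zero N)
  have hF0 : (0 : ℝ) < F := lt_of_lt_of_le one_pos hF1
  have hprodF : ∏ j ∈ Finset.Icc 1 N, ((j : ℕ) : ℝ) = F := by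
    rw [hFdef]
    rw [← Nat.cast_prod]
    congr 1
    rw [show Finset.Icc 1 N = Finset.Ico 1 (N + 1) by rw [Finset.Ico_add_one_right_eq_Icc]]
    exact Finset.prod_Ico_id_eq_factorial N
  have hrhs : ∏ j ∈ Finset.Icc 1 N, (R₀ * (j : ℝ) ^ (-p)) = R₀ ^ N * F ^ (-p) := by
    rw [Finset.prod_mul_distrib, Finset.prod_const, Nat.card_Icc, Nat.add_sub_cancel]
    congr 1
    · have h1 : ∀ j ∈ Finset.Icc 1 N, (j : ℝ) ^ (-p) = (((j : ℝ)) ^ p)⁻¹ := by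
        intro j hj
        rw [Real.rpow_neg (Nat.cast_nonneg j)]
      rw [Finset.prod_congr rfl h1, Finset.prod_inv_distrib]
      rw [Real.finset_prod_rpow _ _ (fun j _ => Nat.cast_nonneg j) p]
      rw [hprodF, ← Real.rpow_neg hF0.le]
  have hmain : α ^ N < R₀ ^ N * F ^ (-p) := lt_of_lt_of_le (by exact hprod) (hrhs ▸ hprod2)
  have hpart1 : F ^ p < (R₀ / α) ^ N := by
    have h2 : α ^ N * F ^ p < (R₀ ^ N * F ^ (-p)) * F ^ p := by
      have hFp : (0 : ℝ) < F ^ p := Real.rpow_pos_of_pos hF0 p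
      exact mul_lt_mul_of_pos_right hmain hFp
    rw [mul_assoc, ← Real.rpow_add hF0, neg_add_cancel, Real.rpow_zero, mul_one] at h2
    rw [div_pow, lt_div_iff₀ (pow_pos hα0 N)]
    linarith [h2]
  refine ⟨hpart1, ?_⟩
  -- second part
  set Q : ℝ := R₀ / α with hQdef
  have hQ1 : (1 : ℝ) ≤ Q := (one_le_div hα0).mpr hαR
  have hQ0 : (0 : ℝ) < Q := lt_of_lt_of_le one_pos hQ1
  have hQr1 : (1 : ℝ) ≤ Q ^ (1 / p) :=
    Real.one_le_rpow hQ1 (by positivity)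
  have he0 : (0 : ℝ) < Real.exp 1 := Real.exp_pos 1
  by_cases hk1 : k = 1
  · subst hk1
    push_cast
    nlinarith
  · have hN1 : 1 ≤ N := by omega
    set a : ℝ := (N : ℝ) / Real.exp 1 with hadef
    have ha0 : 0 ≤ a := by positivity
    -- n! ≥ (n/e)^n
    have hfact : a ^ N ≤ F := by
      have h3 : ((N : ℝ)) ^ N / F ≤ Real.exp N := Real.pow_div_factorial_le_exp (N : ℝ) (Nat.cast_nonneg N) N
      have h4 : Real.exp (N : ℝ) = Real.exp 1 ^ N := by
        rw [← Real.exp_nat_mul]; norm_num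
      rw [hadef, div_pow, div_le_iff₀ (by positivity)]
      rw [div_le_iff₀ hF0] at h3
      rw [h4] at h3
      linarith [h3]
    have hstep1 : (a ^ p) ^ N < Q ^ N := by
      have h5 : (a ^ N : ℝ) ^ p ≤ F ^ p :=
        Real.rpow_le_rpow (pow_nonneg ha0 N) hfact hp0.le
      have h6 : ((a ^ N : ℝ)) ^ p = (a ^ p) ^ N := by
        rw [← Real.rpow_natCast a N, ← Real.rpow_mul ha0, mul_comm ((N : ℕ) : ℝ) p,
          Real.rpow_mul ha0, Real.rpow_natCast]
      rw [← h6]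
      exact lt_of_le_of_lt h5 hpart1
    have hstep2 : a ^ p < Q := by
      by_contra hcon
      push_neg at hcon
      exact absurd hstep1 (not_lt.mpr (pow_le_pow_left₀ hQ0.le hcon N))
    have hstep3 : a ≤ Q ^ (1 / p) := by
      have h7 : (a ^ p) ^ (1 / p) ≤ Q ^ (1 / p) :=
        Real.rpow_le_rpow (Real.rpow_nonneg ha0 p) hstep2.le (by positivity)
      rwa [← Real.rpow_mul ha0, mul_one_div, div_self (ne_of_gt hp0), Real.rpow_one] at h7
    have h8 : (N : ℝ) ≤ Real.exp 1 * Q ^ (1 / p) := by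
      rw [hadef, div_le_iff₀ he0] at hstep3
      linarith [hstep3]
    have h9 : (k : ℝ) = (N : ℝ) + 1 := by
      rw [hN]
      push_cast [Nat.cast_sub hk]
      ring
    rw [h9]
    linarith [h8]
end
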